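/- Let n, k, k' be integers with 1 ≤ k < k' ≤ n, let p be a major motif of n with k parts, and let q be any motif of n with at least k' parts such that q[1] ≤ p[1]. Then p dominates q. -/

import Mathlib

/-- A motif of `n`: a non-increasing sequence (list) of positive integers summing to `n`. -/
def IsMotif (n : ℕ) (p : List ℕ) : Prop :=
  p.Pairwise (· ≥ ·) ∧ (∀ x ∈ p, 0 < x) ∧ p.sum = n

/-- `p` dominates `q`. -/
def Dominates (p q : List ℕ) : Prop :=
  ∀ t, 1 ≤ t → t ≤ min p.length q.length → (q.take t).sum ≤ (p.take t).sum

/-- The major motif of `n` with `k` parts and first entry `lam`: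
`β = ⌊(n−k)/(lam−1)⌋` copies of `lam`, then `n − β·lam − (k−β−1)`,
then `k − β − 1` ones. -/
def majorMotif (n k lam : ℕ) : List ℕ :=
  List.replicate ((n - k) / (lam - 1)) lam ++
    (n - ((n - k) / (lam - 1)) * lam - (k - (n - k) / (lam - 1) - 1)) ::
      List.replicate (k - (n - k) / (lam - 1) - 1) 1

/-- `p` is a major motif of `n` with `k` parts: for some admissible first
entry `lam` (with `1 < lam` and `⌈n/k⌉ ≤ lam ≤ n − k + 1`), `p = majorMotif n k lam`. -/
def IsMajorMotif (n k : ℕ) (p : List ℕ) : Prop :=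
  ∃ lam : ℕ, 1 < lam ∧ (n + k - 1) / k ≤ lam ∧ lam ≤ n - k + 1 ∧
    p = majorMotif n k lam


lemma aux_len_le_sum (l : List ℕ) (h : ∀ x ∈ l, 0 < x) : l.length ≤ l.sum := by
  induction l with
  | nil => simp
  | cons a tl ih =>
    simp only [List.length_cons, List.sum_cons]
    have ha := h a (by simp)
    have := ih (fun x hx => h x (by simp [hx]))
    omega

lemma aux_le_headI (l : List ℕ) (hs : l.Pairwise (· ≥ ·)) : ∀ x ∈ l, x ≤ l.headI := by
  cases l with
  | nil => simp
  | cons a tl =>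
    intro x hx
    rcases List.mem_cons.1 hx with rfl | hx
    · simp
    · exact (List.pairwise_cons.1 hs).1 x hx

/-- for `1 ≤ k < k' ≤ n`, a major motif `p` of `n` with `k`
parts dominates every motif `q` of `n` with at least `k'` parts whose first
entry is at most `p[1]`. -/
theorem strength_stmt_13 {n k k' : ℕ} (h1 : 1 ≤ k) (h2 : k < k') (h3 : k' ≤ n)
    (p q : List ℕ) (hp : IsMotif n p) (hq : IsMotif n q)
    (hplen : p.length = k) (hpmaj : IsMajorMotif n k p)
    (hqlen : k' ≤ q.length) (hfirst : q.headI ≤ p.headI) :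
    Dominates p q := by
  obtain ⟨hps, hppos, hpsum⟩ := hp
  obtain ⟨hqs, hqpos, hqsum⟩ := hq
  obtain ⟨lam, hlam1, -, -, hpeq⟩ := hpmaj
  set β := (n - k) / (lam - 1) with hβ
  set m := k - β - 1 with hm
  set r := n - β * lam - m with hr
  have hpform : p = List.replicate β lam ++ r :: List.replicate m 1 := hpeq
  have hlen : β + 1 + m = k := by
    have h := hplen
    rw [hpform] at h
    simp at h
    omega
  intro t ht htmin
  have htk : t ≤ k := by rw [hplen] at htmin; omega
  by_cases hcase : t ≤ β
  · -- first t entries of p are all lam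
    have hβ1 : 1 ≤ β := by omega
    have hheadp : p.headI = lam := by
      obtain ⟨b, hb⟩ : ∃ b, β = b + 1 := ⟨β - 1, by omega⟩
      rw [hpform, hb, List.replicate_succ]
      rfl
    have htake : p.take t = List.replicate t lam := by
      rw [hpform, List.take_append_of_le_length (by simpa using hcase),
        List.take_replicate, min_eq_left hcase]
    have hqle : ∀ x ∈ q.take t, x ≤ lam := by
      intro x hx
      have := aux_le_headI q hqs x (List.mem_of_mem_take hx)
      omega
    have hb := List.sum_le_card_nsmul (q.take t) lam hqle
    simp only [smul_eq_mul, List.length_take] at hb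
    rw [htake, List.sum_replicate, smul_eq_mul]
    calc (q.take t).sum ≤ min t q.length * lam := hb
      _ ≤ t * lam := Nat.mul_le_mul_right _ (min_le_left _ _)
  · -- t > β : tail of p after position t consists of ones
    have hdrop : p.drop t = List.replicate (k - t) 1 := by
      rw [hpform]
      have h1 : t = (List.replicate β lam).length + (t - β) := by simp; omega
      rw [h1, List.drop_length_add_append]
      obtain ⟨s, hs⟩ : ∃ s, t - β = s + 1 := ⟨t - β - 1, by omega⟩
      rw [hs, List.drop_succ_cons, List.drop_replicate]
      congr 1
      omega
    have hdsum : (p.drop t).sum = k - t := by rw [hdrop]; simp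
    have hsp : (p.take t).sum + (k - t) = n := by
      have := List.sum_take_add_sum_drop p t
      rw [hdsum, hpsum] at this
      exact this
    have hsq : (q.take t).sum + (q.drop t).sum = n := by
      rw [List.sum_take_add_sum_drop, hqsum]
    have hqd : q.length - t ≤ (q.drop t).sum := by
      have := aux_len_le_sum (q.drop t) (fun x hx => hqpos x (List.mem_of_mem_drop hx))
      simpa using this
    omega
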